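/- For every integer k ≥ 3, the generalized Petersen graph GP(k(k+2), k) is distance-balanced. -/

import Mathlib

/-- The generalized Petersen graph `GP(n,k)`: vertices are `Sum.inl i` (the outer
vertices `u_i`) and `Sum.inr i` (the inner vertices `v_i`) for `i ∈ ZMod n`, with
edges `u_i u_{i+1}`, `v_i v_{i+k}` and spokes `u_i v_i`. -/
def genPetersen (n k : ℕ) : SimpleGraph (ZMod n ⊕ ZMod n) :=
  SimpleGraph.fromRel (fun x y =>
    match x, y with
    | Sum.inl i, Sum.inl j => j = i + 1
    | Sum.inr i, Sum.inr j => j = i + (k : ZMod n)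
    | Sum.inl i, Sum.inr j => i = j
    | _, _ => False)

/-- `W_{xy}`: the set of vertices strictly closer to `x` than to `y`. -/
def closerSet {V : Type*} (G : SimpleGraph V) (x y : V) : Set V :=
  {w | G.dist w x < G.dist w y}

/-- `_xW_y`: the set of vertices equidistant from `x` and `y`. -/
def eqDistSet {V : Type*} (G : SimpleGraph V) (x y : V) : Set V :=
  {w | G.dist w x = G.dist w y}

/-- A graph is `ℓ`-distance-balanced if every pair of vertices at distance `ℓ`
is balanced. -/
def IsLDistBalanced {V : Type*} (G : SimpleGraph V) (ℓ : ℕ) : Prop :=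
  ∀ x y : V, G.dist x y = ℓ → (closerSet G x y).ncard = (closerSet G y x).ncard

/-- A graph is distance-balanced if every pair of adjacent vertices is balanced. -/
def IsDistBalanced {V : Type*} (G : SimpleGraph V) : Prop :=
  ∀ x y : V, G.Adj x y → (closerSet G x y).ncard = (closerSet G y x).ncard


open Finset

namespace GPaux

/-- circular distance to 0 in `ZMod n`. -/
def β {m : ℕ} (j : ZMod m) : ℕ := min j.val (m - j.val)

/-- circular distance to 0 of `a` modulo `k+2`. -/
def αc (k a : ℕ) : ℕ := min (a % (k+2)) ((k+2) - a % (k+2))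

lemma mod2 {m a : ℕ} (hm : 0 < m) (h : a < 2*m) : a % m = a ∨ a % m = a - m := by
  rcases lt_or_ge a m with h'|h'
  · exact Or.inl (Nat.mod_eq_of_lt h')
  · right
    rw [Nat.mod_eq_sub_mod h', Nat.mod_eq_of_lt (by omega)]

section beta
variable {m : ℕ} [NeZero m]

lemma β_zero : β (0 : ZMod m) = 0 := by simp [β]

lemma β_eq_zero_iff {j : ZMod m} : β j = 0 ↔ j = 0 := by
  have h1 : j.val < m := ZMod.val_lt j
  rw [← ZMod.val_eq_zero j]
  unfold β; omega

lemma β_triangle (x y : ZMod m) : β (x + y) ≤ β x + β y := by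
  have hm : 0 < m := Nat.pos_of_ne_zero (NeZero.ne m)
  have hx := ZMod.val_lt x
  have hy := ZMod.val_lt y
  have hadd : (x + y).val = (x.val + y.val) % m := ZMod.val_add x y
  rcases mod2 hm (a := x.val + y.val) (by omega) with h|h <;> unfold β <;> omega

lemma β_neg (x : ZMod m) : β (-x) = β x := by
  have hm : 0 < m := Nat.pos_of_ne_zero (NeZero.ne m)
  have hx := ZMod.val_lt x
  have h := ZMod.neg_val x
  unfold β
  split at h
  · subst ‹x = 0›; simp
  · have hx0 : x.val ≠ 0 := fun h0 => ‹x ≠ 0› ((ZMod.val_eq_zero x).mp h0)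
    omega

lemma β_sub_comm (x y : ZMod m) : β (x - y) = β (y - x) := by
  rw [← β_neg (x - y)]; ring_nf

lemma β_one (hm : 1 < m) : β (1 : ZMod m) = 1 := by
  unfold β; rw [ZMod.val_one_eq_one_mod, Nat.mod_eq_of_lt hm]; omega

lemma β_lip_right (hm : 1 < m) (x : ZMod m) : β (x + 1) ≤ β x + 1 := by
  have := β_triangle x (1 : ZMod m); rw [β_one hm] at this; omega

lemma β_lip_left (hm : 1 < m) (x : ZMod m) : β x ≤ β (x + 1) + 1 := by
  have := β_triangle (x + 1) (-1 : ZMod m)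
  rw [β_neg, β_one hm] at this
  simpa using this

/-- decrement step for β -/
lemma β_dec {x : ZMod m} (hm : 1 < m) (hx : x ≠ 0) :
    β (x - 1) + 1 = β x ∨ β (x + 1) + 1 = β x := by
  obtain ⟨v, hvlt, rfl⟩ : ∃ v : ℕ, v < m ∧ x = ((v : ℕ) : ZMod m) :=
    ⟨x.val, ZMod.val_lt x, (ZMod.natCast_rightInverse x).symm⟩
  have hv0 : v ≠ 0 := by rintro rfl; simp at hx
  have hval : ((v : ℕ) : ZMod m).val = v := ZMod.val_cast_of_lt hvlt
  rcases le_or_gt (2 * v) m with h|h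
  · left
    have h1 : ((v : ℕ) : ZMod m) - 1 = ((v - 1 : ℕ) : ZMod m) := by
      push_cast [Nat.cast_sub (by omega : 1 ≤ v)]; ring
    rw [h1]
    have h2 : ((v - 1 : ℕ) : ZMod m).val = v - 1 := ZMod.val_cast_of_lt (by omega)
    unfold β; omega
  · right
    have h1 : ((v : ℕ) : ZMod m) + 1 = ((v + 1 : ℕ) : ZMod m) := by push_cast; ring
    rcases Nat.lt_or_ge (v + 1) m with h'|h'
    · rw [h1]
      have h2 : ((v + 1 : ℕ) : ZMod m).val = v + 1 := ZMod.val_cast_of_lt h'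
      unfold β; omega
    · have h2 : ((v : ℕ) : ZMod m) + 1 = 0 := by
        rw [h1, show v + 1 = m by omega, ZMod.natCast_self]
      rw [h2, β_zero]
      unfold β; omega

end beta

section alpha
variable {k : ℕ}

lemma αc_lt (hk : 0 < k + 2) (a : ℕ) : αc k a ≤ (k+2)/2 := by
  have := Nat.mod_lt a hk
  unfold αc; omega

lemma αc_eval {a : ℕ} (ha : a ≤ k + 1) : αc k a = min a (k + 2 - a) := by
  unfold αc; rw [Nat.mod_eq_of_lt (by omega)]

lemma αc_zero : αc k 0 = 0 := by simp [αc]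

lemma αc_eq_zero_iff {a : ℕ} (ha : a ≤ k + 1) : αc k a = 0 ↔ a = 0 := by
  rw [αc_eval ha]; omega

lemma αc_periodic (a : ℕ) : αc k (a + (k+2)) = αc k a := by
  unfold αc; rw [Nat.add_mod_right]

lemma αc_mod (a : ℕ) : αc k (a % (k+2)) = αc k a := by
  unfold αc; rw [Nat.mod_mod_of_dvd a dvd_rfl]

lemma αc_triangle (a b : ℕ) : αc k (a + b) ≤ αc k a + αc k b := by
  have h2 : 0 < k + 2 := by omega
  have ha := Nat.mod_lt a h2
  have hb := Nat.mod_lt b h2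
  have hadd : (a + b) % (k+2) = (a % (k+2) + b % (k+2)) % (k+2) := by
    rw [Nat.add_mod]
  rcases mod2 h2 (a := a % (k+2) + b % (k+2)) (by omega) with h|h <;>
    unfold αc <;> rw [hadd] <;> omega

lemma αc_one (hk : 1 ≤ k) : αc k 1 = 1 := by
  unfold αc; rw [Nat.mod_eq_of_lt (by omega)]; omega

/-- decrement step for αc -/
lemma αc_dec {a : ℕ} (ha1 : 1 ≤ a) (ha2 : a ≤ k + 1) :
    αc k (a - 1) + 1 = αc k a ∨ αc k (a + 1) + 1 = αc k a := by
  rcases le_or_gt (2*a) (k+2) with h|h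
  · left; rw [αc_eval (by omega), αc_eval (by omega)]; omega
  · right
    rcases Nat.lt_or_ge (a + 1) (k + 2) with h'|h'
    · rw [αc_eval (by omega), αc_eval (by omega)]; omega
    · have : a = k + 1 := by omega
      subst this
      have : αc k (k + 1 + 1) = 0 := by unfold αc; simp
      rw [this, αc_eval (by omega)]; omega

end alpha

section M
variable {k : ℕ}

local notation "n" => k * (k + 2)

lemma n_big (hk : 3 ≤ k) : 15 ≤ n := by
  calc 15 = 3 * 5 := rfl
  _ ≤ k * (k + 2) := Nat.mul_le_mul hk (by omega)

/-- the min-formula for distances in GP(k(k+2),k) -/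
def M (k : ℕ) (j : ZMod (k * (k + 2))) : ℕ :=
  (range (k+2)).inf' ⟨0, mem_range.mpr (by omega)⟩
    (fun a => αc k a + β (j - ((a * k : ℕ) : ZMod (k * (k + 2)))))

lemma cast_nk : ((k * (k+2) : ℕ) : ZMod n) = 0 := ZMod.natCast_self _

lemma castk (a : ℕ) : ((a * k : ℕ) : ZMod n) = ((a % (k+2) * k : ℕ) : ZMod n) := by
  have h : (k+2) * (a/(k+2)) * k = a/(k+2) * (k * (k+2)) := by ring
  calc ((a * k : ℕ) : ZMod n)
      = (((k+2) * (a/(k+2)) + a % (k+2)) * k : ℕ) := by rw [Nat.div_add_mod]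
    _ = ((a/(k+2) * (k * (k+2)) + a % (k+2) * k : ℕ) : ZMod n) := by
        congr 1; rw [Nat.add_mul, h]
    _ = ((a % (k+2) * k : ℕ) : ZMod n) := by
        rw [Nat.cast_add, Nat.cast_mul, ZMod.natCast_self, mul_zero, zero_add]

lemma val_cast_mul_k (hk : 3 ≤ k) (a : ℕ) :
    (((a * k : ℕ) : ZMod n)).val = a % (k+2) * k := by
  haveI : NeZero n := ⟨by have := n_big hk; omega⟩
  rw [castk]
  exact ZMod.val_cast_of_lt (by
    have h1 : a % (k+2) < k + 2 := Nat.mod_lt _ (by omega)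
    calc a % (k+2) * k ≤ (k+1) * k := Nat.mul_le_mul_right k (by omega)
    _ < (k+2) * k := by
        have h0 : 0 < k := by omega
        exact Nat.mul_lt_mul_of_lt_of_le (by omega) le_rfl h0
    _ = k * (k+2) := by ring)

lemma β_cast_mul (hk : 3 ≤ k) (a : ℕ) :
    β (((a * k : ℕ) : ZMod n)) = k * αc k a := by
  haveI : NeZero n := ⟨by have := n_big hk; omega⟩
  have hv := val_cast_mul_k hk a
  set r := a % (k+2) with hr
  have hrlt : r < k + 2 := Nat.mod_lt _ (by omega)
  have hsub : k * (k+2) - r * k = (k + 2 - r) * k := by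
    rw [Nat.sub_mul]; ring_nf
  unfold β
  rw [hv, hsub]
  have hac : αc k a = min r (k + 2 - r) := rfl
  rw [hac]
  rcases le_total r (k + 2 - r) with h|h
  · rw [min_eq_left h, min_eq_left (Nat.mul_le_mul_right k h), mul_comm]
  · rw [min_eq_right h, min_eq_right (Nat.mul_le_mul_right k h), mul_comm]

lemma M_le (j : ZMod n) (a : ℕ) :
    M k j ≤ αc k a + β (j - ((a * k : ℕ) : ZMod n)) := by
  have h : M k j ≤ αc k (a % (k+2)) + β (j - ((a % (k+2) * k : ℕ) : ZMod n)) :=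
    Finset.inf'_le _ (mem_range.mpr (Nat.mod_lt _ (by omega)))
  rwa [αc_mod, ← castk] at h

lemma M_le_of (j r : ZMod n) (a : ℕ)
    (h : j - ((a * k : ℕ) : ZMod n) = r ∨ j - ((a * k : ℕ) : ZMod n) = -r) :
    (hk : 3 ≤ k) → M k j ≤ αc k a + β r := by
  intro hk
  haveI : NeZero n := ⟨by have := n_big hk; omega⟩
  rcases h with h|h
  · rw [← h]; exact M_le j a
  · have := M_le j a; rw [h, β_neg] at this; exact this

lemma M_le0 (hk : 3 ≤ k) (j : ZMod n) : M k j ≤ β j := by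
  have h := M_le j 0
  simpa [αc_zero] using h

lemma M_exists (j : ZMod n) : ∃ a, a ∈ range (k+2) ∧
    M k j = αc k a + β (j - ((a * k : ℕ) : ZMod n)) :=
  Finset.exists_mem_eq_inf' _ _

lemma M_ge (j : ZMod n) (c : ℕ)
    (h : ∀ a ∈ range (k+2), c ≤ αc k a + β (j - ((a * k : ℕ) : ZMod n))) :
    c ≤ M k j := Finset.le_inf' _ _ h

lemma M_lb (hk : 3 ≤ k) (j : ZMod n) {a : ℕ} (ha : a ∈ range (k+2)) (ha0 : a ≠ 0) :
    k + 1 ≤ (αc k a + β (j - ((a * k : ℕ) : ZMod n))) + β j := by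
  haveI : NeZero n := ⟨by have := n_big hk; omega⟩
  have halt : a < k + 2 := mem_range.mp ha
  have h1 : 1 ≤ αc k a := by rw [αc_eval (by omega)]; omega
  have h2 : β (((a * k : ℕ) : ZMod n)) = k * αc k a := β_cast_mul hk a
  have h3 : β (((a * k : ℕ) : ZMod n)) ≤ β (j - ((a * k : ℕ) : ZMod n)) + β j := by
    calc β (((a * k : ℕ) : ZMod n)) = β ((((a * k : ℕ) : ZMod n) - j) + j) := by ring_nf
    _ ≤ β ((((a * k : ℕ) : ZMod n)) - j) + β j := β_triangle _ _
    _ = β (j - (((a * k : ℕ) : ZMod n))) + β j := by rw [β_sub_comm]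
  have h4 : k * 1 ≤ k * αc k a := Nat.mul_le_mul_left k h1
  omega

lemma P1 (hk : 3 ≤ k) {j : ZMod n} (h : 2 * β j ≤ k + 1) : M k j = β j := by
  refine le_antisymm (M_le0 hk j) (M_ge j _ fun a ha => ?_)
  by_cases ha0 : a = 0
  · subst ha0
    simp [αc_zero]
  · have := M_lb hk j ha ha0; omega

lemma P4 (hk : 3 ≤ k) {j : ZMod n} (h : 2 * β j ≤ k + 2) : β j ≤ M k j + 1 := by
  obtain ⟨a, ha, hM⟩ := M_exists j
  rw [hM]
  by_cases ha0 : a = 0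
  · subst ha0; simp [αc_zero]
  · have := M_lb hk j ha ha0; omega

lemma β_cast_small (hk : 3 ≤ k) {b : ℕ} (hb : b ≤ k) :
    β ((b : ℕ) : ZMod n) = b := by
  haveI : NeZero n := ⟨by have := n_big hk; omega⟩
  have hn := n_big hk
  have h2k : 2 * k ≤ k * (k + 2) := by
    calc 2 * k = k * 2 := by ring
    _ ≤ k * (k + 2) := Nat.mul_le_mul_left k (by omega)
  have hv : ((b : ℕ) : ZMod n).val = b := ZMod.val_cast_of_lt (by omega)
  unfold β; omega

lemma αc_top : αc k (k + 2) = 0 := by unfold αc; simp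

lemma hz_mul : ((k : ZMod n) * ((k : ZMod n) + 2)) = 0 := by
  have h := (cast_nk (k := k))
  push_cast at h
  convert h using 2 <;> push_cast <;> ring

lemma M_upper1 (hk : 3 ≤ k) {j : ZMod n} {w : ℕ} (hw : 2 * w ≤ k * (k + 2))
    (hj : j = ((w : ℕ) : ZMod n) ∨ j = -((w : ℕ) : ZMod n)) :
    M k j ≤ w / k + w % k := by
  haveI : NeZero n := ⟨by have := n_big hk; omega⟩
  have hk0 : 0 < k := by omega
  have hdm : w / k * k + w % k = w := by rw [mul_comm]; exact Nat.div_add_mod w k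
  have hblt : w % k < k := Nat.mod_lt _ hk0
  set a₀ := w / k with ha₀
  set b₀ := w % k with hb₀
  have ha2 : 2 * a₀ ≤ k + 2 := by
    refine Nat.le_of_mul_le_mul_left ?_ hk0
    calc k * (2 * a₀) = 2 * (a₀ * k) := by ring
    _ ≤ 2 * w := by omega
    _ ≤ k * (k + 2) := hw
  have hz := hz_mul (k := k)
  have hwc : ((w : ℕ) : ZMod n) = ((a₀ * k + b₀ : ℕ) : ZMod n) := by rw [hdm]
  rcases hj with rfl|rfl
  · have e1 : ((w : ℕ) : ZMod n) - ((a₀ * k : ℕ) : ZMod n) = ((b₀ : ℕ) : ZMod n) := by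
      rw [hwc]; push_cast; ring
    have h := M_le_of (k := k) _ _ a₀ (Or.inl e1) hk
    rw [β_cast_small hk (by omega)] at h
    have := αc_eval (k := k) (a := a₀) (by omega)
    omega
  · by_cases h0 : a₀ = 0
    · have e1 : -((w : ℕ) : ZMod n) - ((0 * k : ℕ) : ZMod n) = -((b₀ : ℕ) : ZMod n) := by
        rw [hwc]; push_cast; rw [h0]; push_cast; ring
      have h := M_le_of (k := k) _ _ 0 (Or.inr e1) hk
      rw [β_cast_small hk (by omega), αc_zero] at h
      omega
    · have e1 : -((w : ℕ) : ZMod n) - (((k + 2 - a₀) * k : ℕ) : ZMod n)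
          = -((b₀ : ℕ) : ZMod n) := by
        rw [hwc]
        push_cast [Nat.cast_sub (show a₀ ≤ k + 2 by omega)]
        linear_combination -hz
      have h := M_le_of (k := k) _ _ (k + 2 - a₀) (Or.inr e1) hk
      rw [β_cast_small hk (by omega)] at h
      have := αc_eval (k := k) (a := k + 2 - a₀) (by omega)
      omega

lemma M_upper2 (hk : 3 ≤ k) {j : ZMod n} {w : ℕ} (hw : w < k)
    (hj : j = ((w : ℕ) : ZMod n) ∨ j = -((w : ℕ) : ZMod n)) :
    M k j ≤ 1 + (k - w) := by
  haveI : NeZero n := ⟨by have := n_big hk; omega⟩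
  have hz := hz_mul (k := k)
  rcases hj with rfl|rfl
  · have e2 : ((w : ℕ) : ZMod n) - ((1 * k : ℕ) : ZMod n)
        = -(((k - w : ℕ) : ℕ) : ZMod n) := by
      push_cast [Nat.cast_sub (le_of_lt hw)]; ring
    have h := M_le_of (k := k) _ _ 1 (Or.inr e2) hk
    rw [β_cast_small hk (by omega), αc_one (by omega)] at h
    omega
  · have e2 : -((w : ℕ) : ZMod n) - (((k + 1) * k : ℕ) : ZMod n)
        = (((k - w : ℕ) : ℕ) : ZMod n) := by
      push_cast [Nat.cast_sub (le_of_lt hw)]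
      linear_combination -hz
    have h := M_le_of (k := k) _ _ (k + 1) (Or.inl e2) hk
    rw [β_cast_small hk (by omega)] at h
    have : αc k (k + 1) = min (k + 1) (k + 2 - (k + 1)) := αc_eval (by omega)
    omega

lemma β_rep (hk : 3 ≤ k) (j : ZMod n) : ∃ w : ℕ, β j = w ∧ 2 * w ≤ k * (k + 2) ∧
    (j = ((w : ℕ) : ZMod n) ∨ j = -((w : ℕ) : ZMod n)) := by
  haveI : NeZero n := ⟨by have := n_big hk; omega⟩
  have hv : j.val < k * (k + 2) := ZMod.val_lt j
  have hjc : ((j.val : ℕ) : ZMod n) = j := ZMod.natCast_rightInverse j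
  rcases le_or_gt (2 * j.val) (k * (k + 2)) with h|h
  · exact ⟨j.val, by unfold β; omega, h, Or.inl hjc.symm⟩
  · refine ⟨k * (k + 2) - j.val, by unfold β; omega, by omega, Or.inr ?_⟩
    have hz := hz_mul (k := k)
    have : ((k * (k + 2) - j.val : ℕ) : ZMod n) = -j := by
      push_cast [Nat.cast_sub (le_of_lt hv), hjc]
      linear_combination hz
    rw [this, neg_neg]

lemma P3 (hk : 3 ≤ k) {j : ZMod n} (h : k + 2 ≤ 2 * β j) : M k j + 1 ≤ β j := by
  obtain ⟨w, hβ, hw2, hj⟩ := β_rep hk j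
  rcases lt_or_ge w k with hw|hw
  · have := M_upper2 hk hw hj
    omega
  · have hU := M_upper1 hk hw2 hj
    have hdm : w / k * k + w % k = w := by rw [mul_comm]; exact Nat.div_add_mod w k
    have hblt : w % k < k := Nat.mod_lt _ (by omega)
    have h3a : 3 * (w / k) ≤ k * (w / k) := Nat.mul_le_mul_right _ hk
    have hcm : k * (w / k) = w / k * k := by ring
    have hq1 : 1 ≤ w / k := Nat.div_pos hw (by omega)
    omega

lemma P2 (hk : 3 ≤ k) {j : ZMod n} (h : k + 3 ≤ 2 * β j) : M k j + 2 ≤ β j := by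
  obtain ⟨w, hβ, hw2, hj⟩ := β_rep hk j
  rcases lt_or_ge w k with hw|hw
  · have := M_upper2 hk hw hj
    omega
  · have hU := M_upper1 hk hw2 hj
    have hdm : w / k * k + w % k = w := by rw [mul_comm]; exact Nat.div_add_mod w k
    have hblt : w % k < k := Nat.mod_lt _ (by omega)
    have h3a : 3 * (w / k) ≤ k * (w / k) := Nat.mul_le_mul_right _ hk
    have hcm : k * (w / k) = w / k * k := by ring
    have hq1 : 1 ≤ w / k := Nat.div_pos hw (by omega)
    omega

lemma M_cast_mul (hk : 3 ≤ k) (a : ℕ) : M k (((a * k : ℕ) : ZMod n)) = αc k a := by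
  haveI : NeZero n := ⟨by have := n_big hk; omega⟩
  refine le_antisymm ?_ ?_
  · have h := M_le_of (k := k) (((a * k : ℕ) : ZMod n)) 0 a (Or.inl (by rw [sub_self])) hk
    rwa [β_zero, add_zero] at h
  · refine M_ge _ _ fun b hb => ?_
    have hblt : b < k + 2 := mem_range.mp hb
    set c := a + (k + 2) - b with hc
    have hbc : b + c = a + (k + 2) := by omega
    have e1 : ((a * k : ℕ) : ZMod n) - ((b * k : ℕ) : ZMod n) = ((c * k : ℕ) : ZMod n) := by
      have hz := hz_mul (k := k)
      push_cast [Nat.cast_sub (show b ≤ a + (k + 2) by omega)]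
      have hbc' := congrArg (Nat.cast : ℕ → ZMod n) hbc
      push_cast at hbc'
      linear_combination (-(k : ZMod n)) * hbc' - hz
    rw [e1, β_cast_mul hk c]
    have h1 : αc k a ≤ αc k b + αc k c := by
      have := αc_triangle (k := k) b c
      rw [hbc, αc_periodic] at this
      exact le_trans (le_of_eq rfl) this
    have h2 : αc k c ≤ k * αc k c := Nat.le_mul_of_pos_left _ (by omega)
    omega

lemma M_lip_right (hk : 3 ≤ k) (j : ZMod n) : M k (j + 1) ≤ M k j + 1 := by
  haveI : NeZero n := ⟨by have := n_big hk; omega⟩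
  have hm : 1 < k * (k + 2) := by have := n_big hk; omega
  obtain ⟨a, _, hM⟩ := M_exists (k := k) j
  have h := M_le (k := k) (j + 1) a
  have e : (j + 1) - ((a * k : ℕ) : ZMod n) = (j - ((a * k : ℕ) : ZMod n)) + 1 := by ring
  rw [e] at h
  have := β_lip_right hm (j - ((a * k : ℕ) : ZMod n))
  omega

lemma M_lip_left (hk : 3 ≤ k) (j : ZMod n) : M k j ≤ M k (j + 1) + 1 := by
  haveI : NeZero n := ⟨by have := n_big hk; omega⟩
  have hm : 1 < k * (k + 2) := by have := n_big hk; omega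
  obtain ⟨a, _, hM⟩ := M_exists (k := k) (j + 1)
  have h := M_le (k := k) j a
  have e : (j + 1) - ((a * k : ℕ) : ZMod n) = (j - ((a * k : ℕ) : ZMod n)) + 1 := by ring
  rw [e] at hM
  have := β_lip_left hm (j - ((a * k : ℕ) : ZMod n))
  omega

lemma M_kstep_right (hk : 3 ≤ k) (j : ZMod n) :
    M k (j + ((k : ℕ) : ZMod n)) ≤ M k j + 1 := by
  haveI : NeZero n := ⟨by have := n_big hk; omega⟩
  obtain ⟨a, _, hM⟩ := M_exists (k := k) j
  have h := M_le (k := k) (j + ((k : ℕ) : ZMod n)) (a + 1)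
  have e : (j + ((k : ℕ) : ZMod n)) - (((a + 1) * k : ℕ) : ZMod n)
      = j - ((a * k : ℕ) : ZMod n) := by push_cast; ring
  rw [e] at h
  have h2 : αc k (a + 1) ≤ αc k a + 1 := by
    have := αc_triangle (k := k) a 1
    rw [αc_one (by omega)] at this
    exact this
  omega

lemma M_kstep_left (hk : 3 ≤ k) (j : ZMod n) :
    M k j ≤ M k (j + ((k : ℕ) : ZMod n)) + 1 := by
  haveI : NeZero n := ⟨by have := n_big hk; omega⟩
  obtain ⟨a, _, hM⟩ := M_exists (k := k) (j + ((k : ℕ) : ZMod n))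
  have h := M_le (k := k) j (a + (k + 1))
  have hz := hz_mul (k := k)
  have e : j - (((a + (k + 1)) * k : ℕ) : ZMod n)
      = (j + ((k : ℕ) : ZMod n)) - ((a * k : ℕ) : ZMod n) := by
    push_cast
    linear_combination -hz
  rw [e] at h
  have h2 : αc k (a + (k + 1)) ≤ αc k a + 1 := by
    have h3 := αc_triangle (k := k) a (k + 1)
    have h4 : αc k (k + 1) = min (k + 1) (k + 2 - (k + 1)) := αc_eval (by omega)
    omega
  omega

lemma M_eq_zero_iff (hk : 3 ≤ k) {j : ZMod n} : M k j = 0 ↔ j = 0 := by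
  haveI : NeZero n := ⟨by have := n_big hk; omega⟩
  constructor
  · intro h
    obtain ⟨a, ha, hM⟩ := M_exists (k := k) j
    rw [h] at hM
    have h1 : αc k a = 0 := by omega
    have h2 : β (j - ((a * k : ℕ) : ZMod n)) = 0 := by omega
    have ha0 : a = 0 := (αc_eq_zero_iff (by have := mem_range.mp ha; omega)).mp h1
    rw [ha0] at h2
    simp only [Nat.zero_mul, Nat.cast_zero, sub_zero] at h2
    exact β_eq_zero_iff.mp h2
  · rintro rfl
    have h := M_le0 hk (0 : ZMod n)
    rw [β_zero] at h
    omega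

lemma dvd_val_add_k (hk : 3 ≤ k) (i : ZMod n) :
    k ∣ (i + ((k : ℕ) : ZMod n)).val ↔ k ∣ i.val := by
  haveI : NeZero n := ⟨by have := n_big hk; omega⟩
  have hkv : (((k : ℕ) : ZMod n)).val = k := ZMod.val_cast_of_lt (by have := n_big hk; nlinarith)
  rw [ZMod.val_add, hkv, Nat.dvd_mod_iff (dvd_mul_right k (k + 2))]
  constructor
  · intro h; exact (Nat.dvd_add_right (dvd_refl k)).mp (by rwa [Nat.add_comm] at h)
  · intro h; exact Nat.dvd_add h (dvd_refl k)

lemma dvd_val_iff_eq_cast (hk : 3 ≤ k) {j : ZMod n} :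
    k ∣ j.val ↔ ∃ c, c < k + 2 ∧ j = ((c * k : ℕ) : ZMod n) := by
  haveI : NeZero n := ⟨by have := n_big hk; omega⟩
  constructor
  · rintro ⟨c, hc⟩
    refine ⟨c, ?_, ?_⟩
    · have := ZMod.val_lt j
      rw [hc] at this
      by_contra h
      push_neg at h
      have : k * (k + 2) ≤ k * c := Nat.mul_le_mul_left k h
      omega
    · rw [← ZMod.natCast_rightInverse j, hc]
      congr 1
      ring
  · rintro ⟨c, hc, rfl⟩
    rw [val_cast_mul_k hk]
    exact dvd_mul_left k _

end M

section generic
variable {V : Type*} {G : SimpleGraph V}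

lemma dist_eq_of_descent (x₀ : V) (D : V → ℕ)
    (h0 : ∀ w, D w = 0 ↔ w = x₀)
    (lip : ∀ a b, G.Adj a b → D a ≤ D b + 1)
    (desc : ∀ w, D w ≠ 0 → ∃ w', G.Adj w w' ∧ D w' < D w) :
    ∀ w, G.dist w x₀ = D w := by
  have upper : ∀ m, ∀ w, D w = m → G.Reachable w x₀ ∧ G.dist w x₀ ≤ D w := by
    intro m
    induction m using Nat.strong_induction_on with
    | _ m ih =>
      intro w hw
      by_cases h : D w = 0
      · have hwx : w = x₀ := (h0 w).mp h
        subst hwx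
        exact ⟨SimpleGraph.Reachable.refl _, by rw [SimpleGraph.dist_self]; omega⟩
      · obtain ⟨w', hadj, hlt⟩ := desc w h
        obtain ⟨hr, hd⟩ := ih (D w') (by omega) w' rfl
        refine ⟨(hadj.reachable).trans hr, ?_⟩
        obtain ⟨p, hp⟩ := hr.exists_walk_length_eq_dist
        have h2 := SimpleGraph.dist_le (SimpleGraph.Walk.cons hadj p)
        rw [SimpleGraph.Walk.length_cons, hp] at h2
        omega
  have lower : ∀ (u v : V) (p : G.Walk u v), D u ≤ p.length + D v := by
    intro u v p
    induction p with
    | nil => omega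
    | cons h p ih =>
      have := lip _ _ h
      rw [SimpleGraph.Walk.length_cons]
      omega
  intro w
  obtain ⟨hr, hd⟩ := upper (D w) w rfl
  obtain ⟨p, hp⟩ := hr.exists_walk_length_eq_dist
  have h1 := lower w x₀ p
  have h2 : D x₀ = 0 := (h0 x₀).mpr rfl
  omega

lemma dist_map_le (σ : G ≃g G) (u v : V) : G.dist (σ u) (σ v) ≤ G.dist u v := by
  by_cases h : G.Reachable u v
  · obtain ⟨p, hp⟩ := h.exists_walk_length_eq_dist
    have h2 := SimpleGraph.dist_le (p.map σ.toHom)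
    rwa [SimpleGraph.Walk.length_map, hp] at h2
  · rw [SimpleGraph.dist_eq_zero_of_not_reachable h,
      SimpleGraph.dist_eq_zero_of_not_reachable]
    intro hc
    apply h
    have := hc.map σ.symm.toHom
    simpa using this

lemma dist_map (σ : G ≃g G) (u v : V) : G.dist (σ u) (σ v) = G.dist u v := by
  refine le_antisymm (dist_map_le σ u v) ?_
  have := dist_map_le σ.symm (σ u) (σ v)
  simpa using this

lemma closer_map (σ : G ≃g G) (x y : V) :
    closerSet G (σ x) (σ y) = σ '' closerSet G x y := by
  have key : ∀ z w : V, G.dist w (σ z) = G.dist (σ.symm w) z := by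
    intro z w
    conv_lhs => rw [← σ.apply_symm_apply w]
    rw [dist_map]
  ext w
  simp only [closerSet, Set.mem_setOf_eq, Set.mem_image]
  constructor
  · intro hw
    rw [key x w, key y w] at hw
    exact ⟨σ.symm w, hw, σ.apply_symm_apply w⟩
  · rintro ⟨w', hw', rfl⟩
    rw [key x _, key y _]
    simpa using hw'

lemma ncard_closer_map (σ : G ≃g G) (x y : V) :
    (closerSet G (σ x) (σ y)).ncard = (closerSet G x y).ncard := by
  rw [closer_map, Set.ncard_image_of_injective _ σ.injective]

end generic

section graph
variable {k : ℕ}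

local notation "n" => k * (k + 2)
local notation "GG" => genPetersen (k * (k + 2)) k

lemma one_ne_zero' (hk : 3 ≤ k) : (1 : ZMod n) ≠ 0 := by
  haveI : NeZero n := ⟨by have := n_big hk; omega⟩
  intro h
  have h1 : (1 : ZMod n).val = 1 := by
    rw [ZMod.val_one_eq_one_mod, Nat.mod_eq_of_lt (by have := n_big hk; omega)]
  rw [h, ZMod.val_zero] at h1
  omega

lemma k_ne_zero' (hk : 3 ≤ k) : ((k : ℕ) : ZMod n) ≠ 0 := by
  haveI : NeZero n := ⟨by have := n_big hk; omega⟩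
  intro h
  have h1 : (((k : ℕ) : ZMod n)).val = k :=
    ZMod.val_cast_of_lt (by have := n_big hk; nlinarith)
  rw [h, ZMod.val_zero] at h1
  omega

lemma adj_inl_inl {i j : ZMod n} :
    (GG).Adj (Sum.inl i) (Sum.inl j) ↔ i ≠ j ∧ (j = i + 1 ∨ i = j + 1) := by
  simp [genPetersen, SimpleGraph.fromRel_adj]

lemma adj_inr_inr {i j : ZMod n} :
    (GG).Adj (Sum.inr i) (Sum.inr j) ↔
      i ≠ j ∧ (j = i + (k : ZMod n) ∨ i = j + (k : ZMod n)) := by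
  simp [genPetersen, SimpleGraph.fromRel_adj]

lemma adj_inl_inr {i j : ZMod n} :
    (GG).Adj (Sum.inl i) (Sum.inr j) ↔ i = j := by
  simp [genPetersen, SimpleGraph.fromRel_adj]

lemma adj_inr_inl {i j : ZMod n} :
    (GG).Adj (Sum.inr i) (Sum.inl j) ↔ j = i := by
  simp [genPetersen, SimpleGraph.fromRel_adj]

/-- claimed distance to `u_0` -/
def Du (k : ℕ) : (ZMod (k*(k+2)) ⊕ ZMod (k*(k+2))) → ℕ
  | Sum.inl j => min (β j) (M k j + 2)
  | Sum.inr j => M k j + 1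

/-- claimed distance to `v_0` -/
def Dv (k : ℕ) : (ZMod (k*(k+2)) ⊕ ZMod (k*(k+2))) → ℕ
  | Sum.inl j => M k j + 1
  | Sum.inr j => if k ∣ j.val then M k j else M k j + 2

lemma ne_self_sub_one (hk : 3 ≤ k) (j : ZMod n) : j ≠ j - 1 := by
  intro h
  exact one_ne_zero' hk (by linear_combination h)

lemma ne_self_add_one (hk : 3 ≤ k) (j : ZMod n) : j ≠ j + 1 := by
  intro h
  exact one_ne_zero' hk (by linear_combination -h)

lemma ne_self_sub_k (hk : 3 ≤ k) (j : ZMod n) : j ≠ j - ((k : ℕ) : ZMod n) := by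
  intro h
  exact k_ne_zero' hk (by linear_combination h)

lemma ne_self_add_k (hk : 3 ≤ k) (j : ZMod n) : j ≠ j + ((k : ℕ) : ZMod n) := by
  intro h
  exact k_ne_zero' hk (by linear_combination -h)

lemma adj_outer_left (hk : 3 ≤ k) (j : ZMod n) : (GG).Adj (Sum.inl j) (Sum.inl (j - 1)) :=
  adj_inl_inl.mpr ⟨ne_self_sub_one hk j, Or.inr (by ring)⟩

lemma adj_outer_right (hk : 3 ≤ k) (j : ZMod n) : (GG).Adj (Sum.inl j) (Sum.inl (j + 1)) :=
  adj_inl_inl.mpr ⟨ne_self_add_one hk j, Or.inl rfl⟩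

lemma adj_spoke (j : ZMod n) : (GG).Adj (Sum.inl j) (Sum.inr j) :=
  adj_inl_inr.mpr rfl

lemma adj_spoke' (j : ZMod n) : (GG).Adj (Sum.inr j) (Sum.inl j) :=
  adj_inr_inl.mpr rfl

lemma adj_inner_left (hk : 3 ≤ k) (j : ZMod n) :
    (GG).Adj (Sum.inr j) (Sum.inr (j - ((k : ℕ) : ZMod n))) :=
  adj_inr_inr.mpr ⟨ne_self_sub_k hk j, Or.inr (by push_cast; ring)⟩

lemma adj_inner_right (hk : 3 ≤ k) (j : ZMod n) :
    (GG).Adj (Sum.inr j) (Sum.inr (j + ((k : ℕ) : ZMod n))) :=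
  adj_inr_inr.mpr ⟨ne_self_add_k hk j, Or.inl (by push_cast; ring)⟩

lemma Du_dist (hk : 3 ≤ k) : ∀ w, (GG).dist w (Sum.inl 0) = Du k w := by
  haveI : NeZero n := ⟨by have := n_big hk; omega⟩
  have hm : (1 : ℕ) < n := by have := n_big hk; omega
  refine dist_eq_of_descent _ _ ?_ ?_ ?_
  · rintro (j|j)
    · simp only [Du]
      constructor
      · intro h
        have hβ : β j = 0 := by omega
        rw [β_eq_zero_iff.mp hβ]
      · rintro h
        rw [Sum.inl.injEq] at h
        subst h
        rw [β_zero]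
        omega
    · simp only [Du]
      constructor
      · omega
      · intro h; exact absurd h (by simp)
  · rintro (i|i) (j|j) hadj
    · rw [adj_inl_inl] at hadj
      obtain ⟨hne, h|h⟩ := hadj
      · subst h
        have h1 := β_lip_left hm i
        have h2 := M_lip_left hk i
        simp only [Du]; omega
      · subst h
        have h1 := β_lip_right hm j
        have h2 := M_lip_right hk j
        simp only [Du]; omega
    · rw [adj_inl_inr] at hadj
      rw [hadj]
      simp only [Du]; omega
    · rw [adj_inr_inl] at hadj
      rw [hadj]
      have := M_le0 hk i
      simp only [Du]; omega
    · rw [adj_inr_inr] at hadj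
      obtain ⟨hne, h|h⟩ := hadj
      · subst h
        have := M_kstep_left hk i
        simp only [Du]; omega
      · subst h
        have := M_kstep_right hk j
        simp only [Du]; omega
  · rintro (j|j) hD
    · simp only [Du] at hD
      have hβ0 : β j ≠ 0 := by omega
      rcases le_or_gt (β j) (M k j + 2) with h|h
      · have hj0 : j ≠ 0 := fun h0 => hβ0 (by rw [h0]; exact β_zero)
        rcases β_dec (x := j) hm hj0 with hd|hd
        · refine ⟨Sum.inl (j - 1), adj_outer_left hk j, ?_⟩
          simp only [Du]
          omega
        · refine ⟨Sum.inl (j + 1), adj_outer_right hk j, ?_⟩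
          simp only [Du]
          omega
      · exact ⟨Sum.inr j, adj_spoke j, by simp only [Du]; omega⟩
    · simp only [Du] at hD ⊢
      rcases le_or_gt (β j) (M k j) with h|h
      · exact ⟨Sum.inl j, adj_spoke' j, by simp only [Du]; omega⟩
      · obtain ⟨a, ha, hMa⟩ := M_exists (k := k) j
        have ha0 : a ≠ 0 := by
          rintro rfl
          simp only [Nat.zero_mul, Nat.cast_zero, sub_zero, αc_zero, zero_add] at hMa
          omega
        have halt : a < k + 2 := mem_range.mp ha
        rcases αc_dec (k := k) (a := a) (by omega) (by omega) with hd|hd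
        · refine ⟨Sum.inr (j - ((k : ℕ) : ZMod n)), adj_inner_left hk j, ?_⟩
          simp only [Du]
          have hstep := M_le (k := k) (j - ((k : ℕ) : ZMod n)) (a + (k + 1))
          have hz := hz_mul (k := k)
          have e : (j - ((k : ℕ) : ZMod n)) - (((a + (k + 1)) * k : ℕ) : ZMod n)
              = j - ((a * k : ℕ) : ZMod n) := by
            push_cast
            linear_combination -hz
          have hper : αc k (a + (k + 1)) = αc k (a - 1) := by
            rw [show a + (k + 1) = (a - 1) + (k + 2) by omega, αc_periodic]
          rw [e, hper] at hstep
          omega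
        · refine ⟨Sum.inr (j + ((k : ℕ) : ZMod n)), adj_inner_right hk j, ?_⟩
          simp only [Du]
          have hstep := M_le (k := k) (j + ((k : ℕ) : ZMod n)) (a + 1)
          have e : (j + ((k : ℕ) : ZMod n)) - (((a + 1) * k : ℕ) : ZMod n)
              = j - ((a * k : ℕ) : ZMod n) := by
            push_cast
            ring
          rw [e] at hstep
          omega

lemma Dv_dist (hk : 3 ≤ k) : ∀ w, (GG).dist w (Sum.inr 0) = Dv k w := by
  haveI : NeZero n := ⟨by have := n_big hk; omega⟩
  have hm : (1 : ℕ) < n := by have := n_big hk; omega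
  refine dist_eq_of_descent _ _ ?_ ?_ ?_
  · rintro (j|j)
    · simp only [Dv]
      constructor
      · omega
      · intro h; exact absurd h (by simp)
    · simp only [Dv]
      constructor
      · intro h
        have hM : M k j = 0 := by
          by_cases hd : k ∣ j.val
          · rwa [if_pos hd] at h
          · rw [if_neg hd] at h; omega
        rw [(M_eq_zero_iff hk).mp hM]
      · rintro h
        rw [Sum.inr.injEq] at h
        subst h
        have h0 : M k (0 : ZMod n) = 0 := (M_eq_zero_iff hk).mpr rfl
        rw [if_pos (by rw [ZMod.val_zero]; exact Dvd.intro 0 rfl), h0]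
  · rintro (i|i) (j|j) hadj
    · rw [adj_inl_inl] at hadj
      obtain ⟨hne, h|h⟩ := hadj
      · subst h
        have h2 := M_lip_left hk i
        simp only [Dv]; omega
      · subst h
        have h2 := M_lip_right hk j
        simp only [Dv]; omega
    · rw [adj_inl_inr] at hadj
      rw [hadj]
      simp only [Dv]
      split_ifs with hd <;> omega
    · rw [adj_inr_inl] at hadj
      rw [hadj]
      simp only [Dv]
      split_ifs with hd <;> omega
    · rw [adj_inr_inr] at hadj
      obtain ⟨hne, h|h⟩ := hadj
      · subst h
        have h2 := M_kstep_left hk i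
        have h3 := M_kstep_right hk i
        have hdvd := dvd_val_add_k hk i
        simp only [Dv]
        by_cases hd : k ∣ i.val
        · rw [if_pos hd, if_pos (hdvd.mpr hd)]; omega
        · rw [if_neg hd, if_neg (fun hc => hd (hdvd.mp hc))]; omega
      · subst h
        have h2 := M_kstep_left hk j
        have h3 := M_kstep_right hk j
        have hdvd := dvd_val_add_k hk j
        simp only [Dv]
        by_cases hd : k ∣ j.val
        · rw [if_pos hd, if_pos (hdvd.mpr hd)]; omega
        · rw [if_neg hd, if_neg (fun hc => hd (hdvd.mp hc))]; omega
  · rintro (j|j) hD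
    · -- at `u_j` : Dv = M j + 1
      simp only [Dv] at hD ⊢
      obtain ⟨a, ha, hMa⟩ := M_exists (k := k) j
      by_cases hr : j - ((a * k : ℕ) : ZMod n) = 0
      · have hjeq : j = ((a * k : ℕ) : ZMod n) := by
          have := sub_eq_zero.mp hr; exact this
        refine ⟨Sum.inr j, adj_spoke j, ?_⟩
        simp only [Dv]
        have hdvd : k ∣ j.val := by
          rw [hjeq, val_cast_mul_k hk]
          exact dvd_mul_left k _
        rw [if_pos hdvd]
        omega
      · rcases β_dec (x := j - ((a * k : ℕ) : ZMod n)) hm hr with hd|hd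
        · refine ⟨Sum.inl (j - 1), adj_outer_left hk j, ?_⟩
          simp only [Dv]
          have hstep := M_le (k := k) (j - 1) a
          have e : (j - 1) - ((a * k : ℕ) : ZMod n)
              = (j - ((a * k : ℕ) : ZMod n)) - 1 := by ring
          rw [e] at hstep
          omega
        · refine ⟨Sum.inl (j + 1), adj_outer_right hk j, ?_⟩
          simp only [Dv]
          have hstep := M_le (k := k) (j + 1) a
          have e : (j + 1) - ((a * k : ℕ) : ZMod n)
              = (j - ((a * k : ℕ) : ZMod n)) + 1 := by ring
          rw [e] at hstep
          omega
    · -- at `v_j`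
      by_cases hd : k ∣ j.val
      · simp only [Dv, if_pos hd] at hD ⊢
        obtain ⟨c, hclt, rfl⟩ := (dvd_val_iff_eq_cast hk).mp hd
        rw [M_cast_mul hk] at hD ⊢
        have hc0 : c ≠ 0 := by
          rintro rfl
          rw [αc_zero] at hD
          omega
        have hz := hz_mul (k := k)
        rcases αc_dec (k := k) (a := c) (by omega) (by omega) with hdec|hdec
        · refine ⟨Sum.inr (((c * k : ℕ) : ZMod n) - ((k : ℕ) : ZMod n)),
            adj_inner_left hk _, ?_⟩
          have e : ((c * k : ℕ) : ZMod n) - ((k : ℕ) : ZMod n)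
              = (((c - 1) * k : ℕ) : ZMod n) := by
            have h1 : (c - 1) * k + k = c * k := by
              have : c - 1 + 1 = c := by omega
              calc (c - 1) * k + k = ((c - 1) + 1) * k := by ring
              _ = c * k := by rw [this]
            calc ((c * k : ℕ) : ZMod n) - ((k : ℕ) : ZMod n)
                = (((c - 1) * k + k : ℕ) : ZMod n) - ((k : ℕ) : ZMod n) := by rw [h1]
            _ = (((c - 1) * k : ℕ) : ZMod n) := by push_cast; ring
          rw [e]
          simp only [Dv]
          rw [if_pos (by rw [val_cast_mul_k hk]; exact dvd_mul_left k _)]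
          rw [M_cast_mul hk]
          omega
        · refine ⟨Sum.inr (((c * k : ℕ) : ZMod n) + ((k : ℕ) : ZMod n)),
            adj_inner_right hk _, ?_⟩
          have e : ((c * k : ℕ) : ZMod n) + ((k : ℕ) : ZMod n)
              = (((c + 1) * k : ℕ) : ZMod n) := by push_cast; ring
          rw [e]
          simp only [Dv]
          rw [if_pos (by rw [val_cast_mul_k hk]; exact dvd_mul_left k _)]
          rw [M_cast_mul hk]
          omega
      · simp only [Dv, if_neg hd] at hD ⊢
        exact ⟨Sum.inl j, adj_spoke' j, by simp only [Dv]; omega⟩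

-- ### counting

lemma closer_ul (hk : 3 ≤ k) : closerSet (GG) (Sum.inl 0) (Sum.inr 0) =
    (Sum.inl '' {j : ZMod n | 2 * β j ≤ k + 1}) ∪
      (Sum.inr '' {j : ZMod n | ¬ k ∣ j.val}) := by
  haveI : NeZero n := ⟨by have := n_big hk; omega⟩
  ext w
  rcases w with j|j
  · simp only [closerSet, Set.mem_setOf_eq, Du_dist hk, Dv_dist hk, Du, Dv,
      Set.mem_union, Set.mem_image, Sum.inl.injEq, Sum.inr.injEq]
    constructor
    · intro h
      refine Or.inl ⟨j, ?_, rfl⟩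
      by_contra hc
      push_neg at hc
      have := P3 hk (j := j) (by omega)
      omega
    · rintro (⟨j', hj', rfl⟩|⟨j', _, hne⟩)
      · have := P1 hk (j := j') hj'
        omega
      · exact absurd hne (by simp)
  · simp only [closerSet, Set.mem_setOf_eq, Du_dist hk, Dv_dist hk, Du, Dv,
      Set.mem_union, Set.mem_image, Sum.inl.injEq, Sum.inr.injEq]
    constructor
    · intro h
      refine Or.inr ⟨j, ?_, rfl⟩
      intro hd
      rw [if_pos hd] at h
      omega
    · rintro (⟨j', _, hne⟩|⟨j', hj', rfl⟩)
      · exact absurd hne (by simp)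
      · rw [if_neg hj']
        omega

lemma closer_ur (hk : 3 ≤ k) : closerSet (GG) (Sum.inr 0) (Sum.inl 0) =
    (Sum.inl '' {j : ZMod n | k + 3 ≤ 2 * β j}) ∪
      (Sum.inr '' {j : ZMod n | k ∣ j.val}) := by
  haveI : NeZero n := ⟨by have := n_big hk; omega⟩
  ext w
  rcases w with j|j
  · simp only [closerSet, Set.mem_setOf_eq, Du_dist hk, Dv_dist hk, Du, Dv,
      Set.mem_union, Set.mem_image, Sum.inl.injEq, Sum.inr.injEq]
    constructor
    · intro h
      refine Or.inl ⟨j, ?_, rfl⟩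
      by_contra hc
      push_neg at hc
      have := P4 hk (j := j) (by omega)
      omega
    · rintro (⟨j', hj', rfl⟩|⟨j', _, hne⟩)
      · have := P2 hk (j := j') hj'
        omega
      · exact absurd hne (by simp)
  · simp only [closerSet, Set.mem_setOf_eq, Du_dist hk, Dv_dist hk, Du, Dv,
      Set.mem_union, Set.mem_image, Sum.inl.injEq, Sum.inr.injEq]
    constructor
    · intro h
      refine Or.inr ⟨j, ?_, rfl⟩
      by_contra hd
      rw [if_neg hd] at h
      omega
    · rintro (⟨j', _, hne⟩|⟨j', hj', rfl⟩)
      · exact absurd hne (by simp)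
      · rw [if_pos hj']
        omega

lemma ncard_inl_union_inr (hk : 3 ≤ k) (A B : Set (ZMod n)) :
    ((Sum.inl '' A : Set (ZMod n ⊕ ZMod n)) ∪ (Sum.inr '' B)).ncard
      = A.ncard + B.ncard := by
  haveI : NeZero n := ⟨by have := n_big hk; omega⟩
  rw [Set.ncard_union_eq ?_ (Set.toFinite _) (Set.toFinite _),
    Set.ncard_image_of_injective _ Sum.inl_injective,
    Set.ncard_image_of_injective _ Sum.inr_injective]
  rw [Set.disjoint_left]
  rintro x ⟨a, _, rfl⟩ ⟨b, _, hb⟩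
  exact Sum.inl_ne_inr hb.symm

lemma ncard_val_set (hk : 3 ≤ k) (p : ℕ → Prop) [DecidablePred p] :
    {j : ZMod n | p j.val}.ncard = ((Finset.range n).filter p).card := by
  haveI : NeZero n := ⟨by have := n_big hk; omega⟩
  classical
  rw [show {j : ZMod n | p j.val}
      = ↑((Finset.univ : Finset (ZMod n)).filter fun j => p j.val) by ext x; simp]
  rw [Set.ncard_coe_finset]
  refine Finset.card_nbij (fun j => j.val) ?_ ?_ ?_
  · intro a ha
    simp only [mem_coe, mem_filter, mem_univ, true_and, mem_range] at ha ⊢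
    exact ⟨ZMod.val_lt a, ha⟩
  · exact fun a _ b _ h => ZMod.val_injective _ h
  · intro v hv
    simp only [mem_coe, mem_filter, mem_range] at hv
    refine ⟨(v : ZMod n), ?_, ZMod.val_cast_of_lt hv.1⟩
    simp only [coe_filter, mem_univ, true_and, Set.mem_setOf_eq]
    rw [ZMod.val_cast_of_lt hv.1]
    exact hv.2

lemma card_small (hk : 3 ≤ k) {t : ℕ} (ht : 2 * t + 1 ≤ n) :
    ((Finset.range n).filter fun v => 2 * min v (n - v) ≤ 2 * t + 1).card
      = 2 * t + 1 := by
  have hset : ((Finset.range n).filter fun v => 2 * min v (n - v) ≤ 2 * t + 1)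
      = Finset.range (t + 1) ∪ Finset.Ico (n - t) n := by
    ext v
    simp only [mem_filter, mem_range, mem_union, mem_Ico]
    omega
  rw [hset, Finset.card_union_of_disjoint, Finset.card_range, Nat.card_Ico]
  · omega
  · rw [Finset.disjoint_left]
    intro v hv hv'
    simp only [mem_range, mem_Ico] at hv hv'
    omega

lemma card_div (hk : 3 ≤ k) :
    ((Finset.range n).filter fun v => k ∣ v).card = k + 2 := by
  have hk0 : 0 < k := by omega
  have hset : ((Finset.range n).filter fun v => k ∣ v)
      = (Finset.range (k + 2)).image (fun c => c * k) := by
    ext v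
    simp only [mem_filter, mem_range, mem_image]
    constructor
    · rintro ⟨hv, c, rfl⟩
      refine ⟨c, ?_, by ring⟩
      by_contra h
      push_neg at h
      have h2 : k * (k + 2) ≤ k * c := Nat.mul_le_mul_left k h
      omega
    · rintro ⟨c, hc, rfl⟩
      refine ⟨?_, dvd_mul_left k c⟩
      have h2 : c * k ≤ (k + 1) * k := Nat.mul_le_mul_right k (by omega)
      have h3 : (k + 1) * k < k * (k + 2) := by nlinarith
      omega
  rw [hset, Finset.card_image_of_injective _
    (fun a b h => Nat.eq_of_mul_eq_mul_right hk0 h), Finset.card_range]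

lemma core_count (hk : 3 ≤ k) :
    (closerSet (GG) (Sum.inl 0) (Sum.inr 0)).ncard
      = (closerSet (GG) (Sum.inr 0) (Sum.inl 0)).ncard := by
  classical
  haveI : NeZero n := ⟨by have := n_big hk; omega⟩
  have hn := n_big hk
  have h5 : 5 * k ≤ n := by
    calc 5 * k = k * 5 := by ring
    _ ≤ k * (k + 2) := Nat.mul_le_mul_left k (by omega)
  rw [closer_ul hk, closer_ur hk, ncard_inl_union_inr hk, ncard_inl_union_inr hk]
  set t1 := (k + 1) / 2 with ht1
  set t2 := (k + 2) / 2 with ht2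
  have hA1 : {j : ZMod n | 2 * β j ≤ k + 1}.ncard = 2 * t1 + 1 := by
    have he : {j : ZMod n | 2 * β j ≤ k + 1}
        = {j : ZMod n | (fun v => 2 * min v (n - v) ≤ 2 * t1 + 1) j.val} := by
      ext j
      simp only [Set.mem_setOf_eq, β]
      omega
    rw [he, show {j : ZMod n | (fun v => 2 * min v (n - v) ≤ 2 * t1 + 1) j.val}.ncard
      = ((Finset.range n).filter fun v => 2 * min v (n - v) ≤ 2 * t1 + 1).card
      from ncard_val_set hk (fun v => 2 * min v (n - v) ≤ 2 * t1 + 1)]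
    exact card_small hk (by omega)
  have hB1 : {j : ZMod n | ¬ k ∣ j.val}.ncard = n - (k + 2) := by
    have he : {j : ZMod n | ¬ k ∣ j.val}
        = {j : ZMod n | (fun v => ¬ k ∣ v) j.val} := rfl
    rw [he, show {j : ZMod n | (fun v => ¬ k ∣ v) j.val}.ncard
      = ((Finset.range n).filter fun v => ¬ k ∣ v).card
      from ncard_val_set hk (fun v => ¬ k ∣ v)]
    have hc := Finset.card_filter_add_card_filter_not
      (s := Finset.range n) (p := fun v => k ∣ v)
    rw [card_div hk, Finset.card_range] at hc
    omega
  have hB2 : {j : ZMod n | k ∣ j.val}.ncard = k + 2 := by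
    have he : {j : ZMod n | k ∣ j.val}
        = {j : ZMod n | (fun v => k ∣ v) j.val} := rfl
    rw [he, show {j : ZMod n | (fun v => k ∣ v) j.val}.ncard
      = ((Finset.range n).filter fun v => k ∣ v).card
      from ncard_val_set hk (fun v => k ∣ v)]
    exact card_div hk
  have hA2 : {j : ZMod n | k + 3 ≤ 2 * β j}.ncard = n - (2 * t2 + 1) := by
    have he : {j : ZMod n | k + 3 ≤ 2 * β j}
        = {j : ZMod n | (fun v => ¬ (2 * min v (n - v) ≤ 2 * t2 + 1)) j.val} := by
      ext j
      simp only [Set.mem_setOf_eq, β]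
      omega
    rw [he, show {j : ZMod n | (fun v => ¬ (2 * min v (n - v) ≤ 2 * t2 + 1)) j.val}.ncard
      = ((Finset.range n).filter fun v => ¬ (2 * min v (n - v) ≤ 2 * t2 + 1)).card
      from ncard_val_set hk (fun v => ¬ (2 * min v (n - v) ≤ 2 * t2 + 1))]
    have hc := Finset.card_filter_add_card_filter_not
      (s := Finset.range n) (p := fun v => 2 * min v (n - v) ≤ 2 * t2 + 1)
    rw [card_small hk (by omega), Finset.card_range] at hc
    omega
  rw [hA1, hB1, hA2, hB2]
  omega

-- ### isomorphisms

lemma addshift {m : ℕ} (t a b c : ZMod m) : a + t = b + t + c ↔ a = b + c := by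
  rw [add_right_comm, add_left_inj]

lemma refshift {m : ℕ} (c a b d : ZMod m) : c - a = c - b + d ↔ b = a + d :=
  ⟨fun h => by linear_combination h, fun h => by linear_combination h⟩

/-- rotation automorphism -/
def rotIso (t : ZMod n) : (GG) ≃g (GG) where
  toEquiv := Equiv.sumCongr (Equiv.addRight t) (Equiv.addRight t)
  map_rel_iff' := by
    intro x y
    rcases x with i|i <;> rcases y with j|j <;>
      simp only [Equiv.sumCongr_apply, Sum.map_inl, Sum.map_inr, Equiv.coe_addRight,
        adj_inl_inl, adj_inr_inr, adj_inl_inr, adj_inr_inl, ne_eq, add_left_inj,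
        addshift]

/-- reflection automorphism -/
def refIso (c : ZMod n) : (GG) ≃g (GG) where
  toEquiv := Equiv.sumCongr (Equiv.subLeft c) (Equiv.subLeft c)
  map_rel_iff' := by
    intro x y
    rcases x with i|i <;> rcases y with j|j <;>
      simp only [Equiv.sumCongr_apply, Sum.map_inl, Sum.map_inr, Equiv.subLeft_apply,
        adj_inl_inl, adj_inr_inr, adj_inl_inr, adj_inr_inl, ne_eq, sub_right_inj,
        refshift] <;>
      tauto

lemma rotIso_inl (t x : ZMod n) : (rotIso t) (Sum.inl x) = Sum.inl (x + t) := rfl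
lemma rotIso_inr (t x : ZMod n) : (rotIso t) (Sum.inr x) = Sum.inr (x + t) := rfl
lemma refIso_inl (c x : ZMod n) : (refIso c) (Sum.inl x) = Sum.inl (c - x) := rfl
lemma refIso_inr (c x : ZMod n) : (refIso c) (Sum.inr x) = Sum.inr (c - x) := rfl

lemma spoke_balanced (hk : 3 ≤ k) (i : ZMod n) :
    (closerSet (GG) (Sum.inl i) (Sum.inr i)).ncard
      = (closerSet (GG) (Sum.inr i) (Sum.inl i)).ncard := by
  have h1 := ncard_closer_map (rotIso i) (Sum.inl 0) (Sum.inr 0)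
  have h2 := ncard_closer_map (rotIso i) (Sum.inr 0) (Sum.inl 0)
  rw [rotIso_inl, rotIso_inr, zero_add] at h1 h2
  rw [h1, h2, core_count hk]

theorem main (hk : 3 ≤ k) : IsDistBalanced (GG) := by
  intro x y hadj
  rcases x with i|i <;> rcases y with j|j
  · have h := ncard_closer_map (refIso (i + j)) (Sum.inl i) (Sum.inl j)
    rw [refIso_inl, refIso_inl,
      show (i + j) - i = j by ring, show (i + j) - j = i by ring] at h
    exact h.symm
  · obtain rfl : i = j := adj_inl_inr.mp hadj
    exact spoke_balanced hk i
  · obtain rfl : j = i := adj_inr_inl.mp hadj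
    exact (spoke_balanced hk j).symm
  · have h := ncard_closer_map (refIso (i + j)) (Sum.inr i) (Sum.inr j)
    rw [refIso_inr, refIso_inr,
      show (i + j) - i = j by ring, show (i + j) - j = i by ring] at h
    exact h.symm

end graph
end GPaux

theorem stmt_3 (k : ℕ) (hk : 3 ≤ k) :
    IsDistBalanced (genPetersen (k * (k + 2)) k) := GPaux.main hk
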